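/- For fixed T with 0 < T < 1, the function I_1(α, T) defined by I_1(α,T) = ((2α-1)/(2 sqrt(2))) ∫_1^∞ ((1-T)^{(v-1/2)(2α-1)/2} - (1-T)^{(-v-1/2)(2α-1)/2}) / ((1 - 1/v)(1-T)^{v(2α-1)/2} + (1 + 1/v)(1-T)^{-v(2α-1)/2})^{3/2} dv satisfies I_1(α, T) → 1/(2 ln(1-T)) as α → ∞. -/

import Mathlib

open Real MeasureTheory Filter Set

lemma my_integral_Ioi_comp_add (f : ℝ → ℝ) (a c : ℝ) :
    ∫ x in Set.Ioi a, f (x + c) = ∫ x in Set.Ioi (a + c), f x := by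
  rw [← integral_indicator measurableSet_Ioi, ← integral_indicator measurableSet_Ioi,
    ← integral_add_right_eq_self (Set.indicator (Set.Ioi (a + c)) f) c]
  congr 1
  ext x
  simp only [Set.indicator_apply, Set.mem_Ioi, add_lt_add_iff_right]

lemma my_master (L c u v : ℝ) (hc : 0 < c) (hu : 0 < u) (hv : v = (c/2)⁻¹ * u + 1) :
    (Real.exp ((v - 1/2) * c / 2 * L) - Real.exp ((-v - 1/2) * c / 2 * L)) /
      ((1 - 1/v) * Real.exp (v * c / 2 * L) + (1 + 1/v) * Real.exp (-v * c / 2 * L)) ^ ((3:ℝ)/2)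
    = (Real.exp (c*L + 5*u*L/2) - Real.exp (u*L/2)) /
      ((1 - 1/v) * Real.exp (c*L + 2*u*L) + (1 + 1/v)) ^ ((3:ℝ)/2) := by
  have hv1 : 1 < v := by
    have h1 : 0 < (c/2)⁻¹ * u := by positivity
    rw [hv]; linarith
  have hv0 : 0 < v := by linarith
  have h1v : 0 ≤ 1 - 1/v := by
    rw [sub_nonneg]; exact (div_le_one hv0).mpr hv1.le
  have hB : 0 < (1 - 1/v) * Real.exp (c*L + 2*u*L) + (1 + 1/v) :=
    add_pos_of_nonneg_of_pos (mul_nonneg h1v (Real.exp_pos _).le) (by positivity)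
  have hvc : v * c = c + 2*u := by
    rw [hv]; field_simp; ring
  have factor : (1 - 1/v) * Real.exp (v * c / 2 * L) + (1 + 1/v) * Real.exp (-v * c / 2 * L)
      = Real.exp (-v * c / 2 * L) * ((1 - 1/v) * Real.exp (c*L + 2*u*L) + (1 + 1/v)) := by
    have e : Real.exp (-v * c / 2 * L) * Real.exp (c*L + 2*u*L) = Real.exp (v * c / 2 * L) := by
      rw [← Real.exp_add]; congr 1; linear_combination (-L) * hvc
    linear_combination (-(1 - 1/v)) * e
  rw [factor, Real.mul_rpow (Real.exp_pos _).le hB.le, ← Real.exp_mul, ← div_div, sub_div,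
    ← Real.exp_sub, ← Real.exp_sub]
  have e1 : (v - 1/2) * c / 2 * L - -v * c / 2 * L * (3/2) = c*L + 5*u*L/2 := by
    linear_combination (5*L/4) * hvc
  have e2 : (-v - 1/2) * c / 2 * L - -v * c / 2 * L * (3/2) = u*L/2 := by
    linear_combination (L/4) * hvc
  rw [e1, e2]

lemma my_dct (L : ℝ) (hL : L < 0) :
    Tendsto (fun c : ℝ => ∫ u in Set.Ioi (0:ℝ),
      (Real.exp (c*L + 5*u*L/2) - Real.exp (u*L/2)) /
        ((1 - 1/((c/2)⁻¹*u + 1)) * Real.exp (c*L + 2*u*L) + (1 + 1/((c/2)⁻¹*u + 1))) ^ ((3:ℝ)/2))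
      atTop (nhds (∫ u in Set.Ioi (0:ℝ), -Real.exp (u*L/2) / (2*Real.sqrt 2))) := by
  apply MeasureTheory.tendsto_integral_filter_of_dominated_convergence
    (fun u => Real.exp (u*L/2))
  · filter_upwards with c
    apply Measurable.aestronglyMeasurable
    fun_prop
  · filter_upwards [eventually_ge_atTop (1:ℝ)] with c hc
    rw [ae_restrict_iff' measurableSet_Ioi]
    filter_upwards with u hu
    have hc0 : 0 < c := by linarith
    have hu0 : 0 < u := hu
    have hvv : 0 < (c/2)⁻¹ * u := by positivity
    have hv1 : 1 < (c/2)⁻¹*u + 1 := by linarith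
    have hv0 : 0 < (c/2)⁻¹*u + 1 := by linarith
    have h1v : 0 ≤ 1 - 1/((c/2)⁻¹*u + 1) := by
      rw [sub_nonneg]; exact (div_le_one hv0).mpr hv1.le
    have hB1 : 1 ≤ (1 - 1/((c/2)⁻¹*u + 1)) * Real.exp (c*L + 2*u*L) + (1 + 1/((c/2)⁻¹*u + 1)) := by
      have h2 : 0 ≤ (1 - 1/((c/2)⁻¹*u + 1)) * Real.exp (c*L + 2*u*L) :=
        mul_nonneg h1v (Real.exp_pos _).le
      have h3 : 0 < 1/((c/2)⁻¹*u + 1) := by positivity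
      linarith
    have hD1 : 1 ≤ ((1 - 1/((c/2)⁻¹*u + 1)) * Real.exp (c*L + 2*u*L)
        + (1 + 1/((c/2)⁻¹*u + 1))) ^ ((3:ℝ)/2) := by
      rw [show (1:ℝ) = 1 ^ ((3:ℝ)/2) from (Real.one_rpow _).symm]
      exact Real.rpow_le_rpow (by norm_num) (by rw [Real.one_rpow]; exact hB1) (by norm_num)
    have hle : Real.exp (c*L + 5*u*L/2) ≤ Real.exp (u*L/2) := by
      apply Real.exp_le_exp.mpr
      nlinarith [mul_nonneg (show (0:ℝ) ≤ c - 1 by linarith) (show (0:ℝ) ≤ -L by linarith),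
        mul_nonneg hu0.le (show (0:ℝ) ≤ -L by linarith)]
    have hnum : |Real.exp (c*L + 5*u*L/2) - Real.exp (u*L/2)| ≤ Real.exp (u*L/2) := by
      rw [abs_of_nonpos (by linarith)]
      have := Real.exp_pos (c*L + 5*u*L/2)
      linarith
    rw [Real.norm_eq_abs, abs_div,
      abs_of_nonneg (Real.rpow_nonneg (le_trans zero_le_one hB1) _)]
    exact le_trans (div_le_self (abs_nonneg _) hD1) hnum
  · have h := exp_neg_integrableOn_Ioi 0 (show 0 < -L/2 by linarith)
    have heq : (fun x : ℝ => Real.exp (-(-L/2) * x)) = fun u => Real.exp (u*L/2) := by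
      funext x; ring_nf
    rwa [heq] at h
  · rw [ae_restrict_iff' measurableSet_Ioi]
    filter_upwards with u hu
    have hu0 : 0 < u := hu
    have hA : Tendsto (fun c : ℝ => Real.exp (c*L + 5*u*L/2)) atTop (nhds 0) := by
      apply Real.tendsto_exp_atBot.comp
      exact tendsto_atBot_add_const_right _ _ ((tendsto_mul_const_atBot_of_neg hL).2 tendsto_id)
    have hA2 : Tendsto (fun c : ℝ => Real.exp (c*L + 2*u*L)) atTop (nhds 0) := by
      apply Real.tendsto_exp_atBot.comp
      exact tendsto_atBot_add_const_right _ _ ((tendsto_mul_const_atBot_of_neg hL).2 tendsto_id)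
    have hvlim : Tendsto (fun c : ℝ => 1/((c/2)⁻¹*u + 1)) atTop (nhds 1) := by
      have h00 : Tendsto (fun c : ℝ => (c/2)⁻¹) atTop (nhds 0) :=
        Tendsto.inv_tendsto_atTop ((tendsto_div_const_atTop_of_pos two_pos).2 tendsto_id)
      have h0 := h00.mul_const u
      rw [zero_mul] at h0
      have h1 := h0.add_const 1
      rw [zero_add] at h1
      have h2 := h1.inv₀ one_ne_zero
      rw [inv_one] at h2
      simp only [one_div]
      exact h2
    have hbase : Tendsto (fun c : ℝ =>
        (1 - 1/((c/2)⁻¹*u + 1)) * Real.exp (c*L + 2*u*L) + (1 + 1/((c/2)⁻¹*u + 1)))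
        atTop (nhds 2) := by
      have := ((tendsto_const_nhds (x := (1:ℝ))).sub hvlim).mul hA2 |>.add
        ((tendsto_const_nhds (x := (1:ℝ))).add hvlim)
      rw [show ((1:ℝ)-1)*0 + (1+1) = 2 by norm_num] at this
      exact this
    have hden : Tendsto (fun c : ℝ =>
        ((1 - 1/((c/2)⁻¹*u + 1)) * Real.exp (c*L + 2*u*L) + (1 + 1/((c/2)⁻¹*u + 1))) ^ ((3:ℝ)/2))
        atTop (nhds ((2:ℝ) ^ ((3:ℝ)/2))) :=
      hbase.rpow_const (Or.inl two_ne_zero)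
    have hnum : Tendsto (fun c : ℝ => Real.exp (c*L + 5*u*L/2) - Real.exp (u*L/2))
        atTop (nhds (0 - Real.exp (u*L/2))) := hA.sub tendsto_const_nhds
    have hfin := hnum.div hden (by positivity : ((2:ℝ) ^ ((3:ℝ)/2)) ≠ 0)
    have h232 : (2:ℝ) ^ ((3:ℝ)/2) = 2 * Real.sqrt 2 := by
      rw [show (3:ℝ)/2 = 1 + 1/2 by norm_num, Real.rpow_add two_pos, Real.rpow_one,
        Real.sqrt_eq_rpow]
    have hval : -Real.exp (u*L/2) / (2*Real.sqrt 2)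
        = (0 - Real.exp (u*L/2)) / ((2:ℝ) ^ ((3:ℝ)/2)) := by
      rw [h232]; ring
    rw [hval]
    exact hfin

lemma my_int_exp (L : ℝ) (hL : L < 0) :
    ∫ u in Set.Ioi (0:ℝ), Real.exp (u*L/2) = -2/L := by
  have hpos : 0 < -L/2 := by linarith
  have h := integral_comp_mul_left_Ioi (fun x => Real.exp (-x)) 0 hpos
  rw [mul_zero, integral_exp_neg_Ioi, neg_zero, Real.exp_zero, smul_eq_mul, mul_one] at h
  have heq : (∫ x in Set.Ioi (0:ℝ), (fun x => Real.exp (-x)) (-L/2 * x))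
      = ∫ u in Set.Ioi (0:ℝ), Real.exp (u*L/2) := by
    congr 1; funext x; simp only []; ring_nf
  rw [heq] at h
  rw [h]; field_simp

theorem stmt_12 (T : ℝ) (hT0 : 0 < T) (hT1 : T < 1) :
    Filter.Tendsto
      (fun α : ℝ => ((2*α - 1) / (2 * Real.sqrt 2)) *
        ∫ v in Set.Ioi (1:ℝ),
          (Real.exp ((v - 1/2) * (2*α - 1) / 2 * Real.log (1 - T)) -
           Real.exp ((-v - 1/2) * (2*α - 1) / 2 * Real.log (1 - T))) /
            ((1 - 1/v) * Real.exp (v * (2*α - 1) / 2 * Real.log (1 - T)) +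
             (1 + 1/v) * Real.exp (-v * (2*α - 1) / 2 * Real.log (1 - T))) ^ ((3:ℝ)/2))
      Filter.atTop (nhds (1 / (2 * Real.log (1 - T)))) := by
  have hT' : (0:ℝ) < 1 - T := by linarith
  set L := Real.log (1 - T) with hLdef
  have hL : L < 0 := Real.log_neg hT' (by linarith)
  have hL0 : L ≠ 0 := ne_of_lt hL
  have hs2 : Real.sqrt 2 * Real.sqrt 2 = 2 := Real.mul_self_sqrt (by norm_num)
  have hs2pos : 0 < Real.sqrt 2 := Real.sqrt_pos.mpr (by norm_num)
  have hcα : Tendsto (fun α : ℝ => 2*α - 1) atTop atTop := by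
    apply tendsto_atTop_add_const_right
    exact (tendsto_const_mul_atTop_of_pos two_pos).2 tendsto_id
  have hmain := ((my_dct L hL).comp hcα).const_mul (Real.sqrt 2)⁻¹
  have hI : ∫ u in Set.Ioi (0:ℝ), -Real.exp (u*L/2) / (2*Real.sqrt 2)
      = (-(2*Real.sqrt 2)⁻¹) * (-2/L) := by
    rw [← my_int_exp L hL, ← integral_const_mul]
    congr 1; funext u; ring
  have hval : (1:ℝ)/(2*L)
      = (Real.sqrt 2)⁻¹ * ∫ u in Set.Ioi (0:ℝ), -Real.exp (u*L/2) / (2*Real.sqrt 2) := by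
    have hs2' : (Real.sqrt 2)⁻¹ * (Real.sqrt 2)⁻¹ = 2⁻¹ := by rw [← mul_inv, hs2]
    rw [hI]
    linear_combination (-1/L) * hs2'
  rw [hval]
  apply Tendsto.congr' _ hmain
  filter_upwards [eventually_ge_atTop (1:ℝ)] with α hα
  simp only [Function.comp]
  set c := 2*α - 1 with hc
  have hc0 : 0 < c := by rw [hc]; linarith
  have hstep1 : (∫ u in Set.Ioi (0:ℝ),
      (Real.exp (c*L + 5*u*L/2) - Real.exp (u*L/2)) /
        ((1 - 1/((c/2)⁻¹*u + 1)) * Real.exp (c*L + 2*u*L) + (1 + 1/((c/2)⁻¹*u + 1))) ^ ((3:ℝ)/2))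
      = ∫ u in Set.Ioi (0:ℝ),
        (Real.exp (((c/2)⁻¹*u + 1 - 1/2) * c / 2 * L) -
         Real.exp ((-((c/2)⁻¹*u + 1) - 1/2) * c / 2 * L)) /
          ((1 - 1/((c/2)⁻¹*u + 1)) * Real.exp (((c/2)⁻¹*u + 1) * c / 2 * L) +
           (1 + 1/((c/2)⁻¹*u + 1)) * Real.exp (-((c/2)⁻¹*u + 1) * c / 2 * L)) ^ ((3:ℝ)/2) := by
    apply setIntegral_congr_fun measurableSet_Ioi
    intro u hu
    exact (my_master L c u _ hc0 hu rfl).symm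
  have hstep2 : (∫ u in Set.Ioi (0:ℝ),
      (Real.exp (((c/2)⁻¹*u + 1 - 1/2) * c / 2 * L) -
       Real.exp ((-((c/2)⁻¹*u + 1) - 1/2) * c / 2 * L)) /
        ((1 - 1/((c/2)⁻¹*u + 1)) * Real.exp (((c/2)⁻¹*u + 1) * c / 2 * L) +
         (1 + 1/((c/2)⁻¹*u + 1)) * Real.exp (-((c/2)⁻¹*u + 1) * c / 2 * L)) ^ ((3:ℝ)/2))
      = (c/2) * ∫ v in Set.Ioi (1:ℝ),
        (Real.exp ((v - 1/2) * c / 2 * L) - Real.exp ((-v - 1/2) * c / 2 * L)) /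
          ((1 - 1/v) * Real.exp (v * c / 2 * L) +
           (1 + 1/v) * Real.exp (-v * c / 2 * L)) ^ ((3:ℝ)/2) := by
    set φ : ℝ → ℝ := fun v =>
      (Real.exp ((v - 1/2) * c / 2 * L) - Real.exp ((-v - 1/2) * c / 2 * L)) /
        ((1 - 1/v) * Real.exp (v * c / 2 * L) +
         (1 + 1/v) * Real.exp (-v * c / 2 * L)) ^ ((3:ℝ)/2) with hφ
    have t1 := integral_comp_mul_left_Ioi (fun x => φ (x + 1)) 0
      (inv_pos.mpr (by positivity : (0:ℝ) < c/2))
    simp only [mul_zero, inv_inv, smul_eq_mul] at t1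
    rw [my_integral_Ioi_comp_add φ 0 1, zero_add] at t1
    exact t1
  rw [hstep1, hstep2, ← mul_assoc]
  congr 1
  rw [show (Real.sqrt 2)⁻¹ * (c/2) = c / (2 * Real.sqrt 2) by
    rw [div_eq_mul_inv c (2*Real.sqrt 2), mul_inv]; ring]
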